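/- Under the setting of a locally balanced proposal (finite state space X, positive unnormalized target p̃, positive balancing function g, symmetric irreflexive neighborhoods N with nonempty N(x)), the Metropolis–Hastings acceptance probability A(x',x) = min{1, p̃(x')Q(x|x')/(p̃(x)Q(x'|x))} simplifies to A(x',x) = min{1, Z(x)/Z(x')} for all x' ∈ N(x). -/

import Mathlib

theorem locally_balanced_acceptance_simplifies
    {X : Type*} [Fintype X] [DecidableEq X]
    (ptil : X → ℝ) (hp : ∀ x, 0 < ptil x)
    (g : ℝ → ℝ)
    (hbal : ∀ t : ℝ, 0 < t → g t = t * g (1 / t))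
    (hgpos : ∀ t : ℝ, 0 < t → 0 < g t)
    (N : X → Finset X)
    (hsym : ∀ x x', x' ∈ N x ↔ x ∈ N x')
    (hirr : ∀ x, x ∉ N x)
    (hne : ∀ x, (N x).Nonempty)
    (Z : X → ℝ) (hZ : ∀ x, Z x = ∑ x'' ∈ N x, g (ptil x'' / ptil x))
    (Q : X → X → ℝ)
    (hQ : ∀ x' x, Q x' x = g (ptil x' / ptil x) * (if x' ∈ N x then 1 else 0) / Z x) :
    ∀ x x', x' ∈ N x →
      min 1 (ptil x' * Q x x' / (ptil x * Q x' x)) = min 1 (Z x / Z x') := by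
  intro x x' hmem
  have hZpos : ∀ y, 0 < Z y := by
    intro y
    rw [hZ y]
    exact Finset.sum_pos (fun i _ => hgpos _ (div_pos (hp i) (hp y))) (hne y)
  have hmem' : x ∈ N x' := (hsym x x').mp hmem
  have hQ1 : Q x x' = g (ptil x / ptil x') / Z x' := by
    rw [hQ, if_pos hmem', mul_one]
  have hQ2 : Q x' x = g (ptil x' / ptil x) / Z x := by
    rw [hQ, if_pos hmem, mul_one]
  have hkey : ptil x * g (ptil x' / ptil x) = ptil x' * g (ptil x / ptil x') := by
    have := hbal (ptil x' / ptil x) (div_pos (hp x') (hp x))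
    rw [one_div_div] at this
    rw [this]
    field_simp
    rw [mul_assoc]
    exact mul_div_cancel_left₀ _ (hp x).ne'
  have hg1 : 0 < g (ptil x / ptil x') := hgpos _ (div_pos (hp x) (hp x'))
  have hg2 : 0 < g (ptil x' / ptil x) := hgpos _ (div_pos (hp x') (hp x))
  have hmain : ptil x' * Q x x' / (ptil x * Q x' x) = Z x / Z x' := by
    rw [hQ1, hQ2]
    rw [div_eq_div_iff (mul_pos (hp x) (div_pos hg2 (hZpos x))).ne' (hZpos x').ne']
    field_simp [(hZpos x).ne', (hZpos x').ne']
    linear_combination (-1 : ℝ) * hkey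
  rw [hmain]
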